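/- Let V be a real symmetric log-concave random variable and t > 0 with P(|V| ≥ t) ≤ 1/4. Then E[|V|·1_{{|V| ≥ t}}] ≤ 4·t·P(|V| ≥ t). -/

import Mathlib

open MeasureTheory Finset Pointwise
open scoped ENNReal

noncomputable def maxKSum {n : ℕ} (k : ℕ) (x : Fin n → ℝ) : ℝ :=
  sSup {y | ∃ I : Finset (Fin n), I.card = k ∧ y = ∑ i ∈ I, |x i|}

noncomputable def kthMax {n : ℕ} (k : ℕ) (x : Fin n → ℝ) : ℝ :=
  sSup {t : ℝ | k ≤ (Finset.univ.filter (fun i => t ≤ |x i|)).card}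

noncomputable def tk {Ω : Type*} [MeasurableSpace Ω] (μ : Measure Ω) {n : ℕ}
    (X : Fin n → Ω → ℝ) (k : ℝ) : ℝ :=
  sInf {t : ℝ | 0 < t ∧ ∑ i, ∫ ω in {ω | t ≤ |X i ω|}, |X i ω| ∂μ ≤ k * t}

noncomputable def tstar {Ω : Type*} [MeasurableSpace Ω] (μ : Measure Ω) {n : ℕ}
    (X : Fin n → Ω → ℝ) (p : ℝ) : ℝ :=
  sInf {t : ℝ | 0 < t ∧ ∑ i, (μ {ω | t ≤ |X i ω|}).toReal ≤ p}

def IsLogConcave {E : Type*} [AddCommGroup E] [Module ℝ E] [TopologicalSpace E]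
    [MeasurableSpace E] (ν : Measure E) : Prop :=
  ∀ (K L : Set E) (l : ℝ), IsCompact K → IsCompact L → K.Nonempty → L.Nonempty →
    l ∈ Set.Icc (0 : ℝ) 1 → ν K ^ l * ν L ^ (1 - l) ≤ ν (l • K + (1 - l) • L)

noncomputable def med {Ω : Type*} [MeasurableSpace Ω] (μ : Measure Ω) (f : Ω → ℝ) : ℝ :=
  sInf {t : ℝ | (1 : ℝ) / 2 ≤ (μ {ω | f ω ≤ t}).toReal}

noncomputable def kthMaxOn {n : ℕ} (J : Finset (Fin n)) (k : ℕ) (x : Fin n → ℝ) : ℝ :=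
  sSup {t : ℝ | k ≤ (J.filter (fun i => t ≤ |x i|)).card}

private lemma aux_key {ν : Measure ℝ} [IsProbabilityMeasure ν] (hlc : IsLogConcave ν)
    (t : ℝ) (ht : 0 < t) (n : ℕ) (hn : 1 ≤ n) :
    ν (Set.Ici ((n:ℝ)*t)) ^ ((n:ℝ)⁻¹) * ν (Set.Ici 0) ^ (1 - (n:ℝ)⁻¹) ≤ ν (Set.Ici t) := by
  have hn0 : (0:ℝ) < n := by exact_mod_cast hn
  set c : ℝ := (n:ℝ)⁻¹ with hc
  have hc0 : 0 < c := inv_pos.mpr hn0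
  have hc1 : c ≤ 1 := by
    rw [hc]; rw [inv_le_one_iff₀]; right; exact_mod_cast hn
  have hcn : c * n = 1 := inv_mul_cancel₀ (ne_of_gt hn0)
  have hnt : 0 < (n:ℝ)*t := by positivity
  have hcomp : ∀ k : ℕ,
      ν (Set.Icc ((n:ℝ)*t) ((n:ℝ)*t + k)) ^ c * ν (Set.Icc 0 ((n:ℝ)*t + k)) ^ (1-c)
        ≤ ν (Set.Ici t) := by
    intro k
    have h := hlc (Set.Icc ((n:ℝ)*t) ((n:ℝ)*t + k)) (Set.Icc 0 ((n:ℝ)*t + k)) c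
      isCompact_Icc isCompact_Icc
      (Set.nonempty_Icc.mpr (le_add_of_nonneg_right (Nat.cast_nonneg k)))
      (Set.nonempty_Icc.mpr (by positivity))
      ⟨hc0.le, hc1⟩
    refine h.trans (measure_mono ?_)
    rintro x hx
    rw [Set.mem_add] at hx
    obtain ⟨y, hy, z, hz, rfl⟩ := hx
    rw [Set.mem_smul_set] at hy hz
    obtain ⟨u, hu, rfl⟩ := hy
    obtain ⟨v, hv, rfl⟩ := hz
    simp only [smul_eq_mul, Set.mem_Ici]
    have hu1 : (n:ℝ)*t ≤ u := hu.1
    have hv1 : 0 ≤ v := hv.1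
    have h1 : t ≤ c * u := by
      calc t = c * ((n:ℝ)*t) := by rw [← mul_assoc, hcn, one_mul]
        _ ≤ c * u := by apply mul_le_mul_of_nonneg_left hu1 hc0.le
    nlinarith [mul_nonneg (by linarith : (0:ℝ) ≤ 1 - c) hv1]
  have hmono : ∀ a : ℝ, Monotone (fun k : ℕ => Set.Icc a ((n:ℝ)*t + k)) := by
    intro a i j hij
    apply Set.Icc_subset_Icc_right
    have : (i:ℝ) ≤ j := by exact_mod_cast hij
    linarith
  have hunion : ∀ a : ℝ, a ≤ (n:ℝ)*t → (⋃ k : ℕ, Set.Icc a ((n:ℝ)*t + k)) = Set.Ici a := by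
    intro a ha
    ext x
    simp only [Set.mem_iUnion, Set.mem_Icc, Set.mem_Ici]
    constructor
    · rintro ⟨k, h1, _⟩; exact h1
    · intro h
      obtain ⟨k, hk⟩ := exists_nat_ge (x - (n:ℝ)*t)
      exact ⟨k, h, by linarith⟩
  have hT1 : Filter.Tendsto (fun k : ℕ => ν (Set.Icc ((n:ℝ)*t) ((n:ℝ)*t + k))) Filter.atTop
      (nhds (ν (Set.Ici ((n:ℝ)*t)))) := by
    rw [← hunion _ le_rfl]
    exact tendsto_measure_iUnion_atTop (hmono _)
  have hT2 : Filter.Tendsto (fun k : ℕ => ν (Set.Icc 0 ((n:ℝ)*t + k))) Filter.atTop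
      (nhds (ν (Set.Ici 0))) := by
    rw [← hunion 0 hnt.le]
    exact tendsto_measure_iUnion_atTop (hmono _)
  have hT : Filter.Tendsto
      (fun k : ℕ => ν (Set.Icc ((n:ℝ)*t) ((n:ℝ)*t + k)) ^ c * ν (Set.Icc 0 ((n:ℝ)*t + k)) ^ (1-c))
      Filter.atTop (nhds (ν (Set.Ici ((n:ℝ)*t)) ^ c * ν (Set.Ici 0) ^ (1-c))) := by
    refine ENNReal.Tendsto.mul (hT1.ennrpow_const c) ?_ (hT2.ennrpow_const (1-c)) ?_
    · exact Or.inr (ENNReal.rpow_ne_top_of_nonneg (by linarith) (measure_ne_top ν _))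
    · exact Or.inr (ENNReal.rpow_ne_top_of_nonneg hc0.le (measure_ne_top ν _))
  exact le_of_tendsto hT (Filter.Eventually.of_forall hcomp)

theorem stmt_7 {Ω : Type*} [MeasurableSpace Ω] (μ : Measure Ω) [IsProbabilityMeasure μ]
    (V : Ω → ℝ) (hmeas : Measurable V)
    (hsym : μ.map V = μ.map (fun ω => -V ω)) (hlc : IsLogConcave (μ.map V))
    (t : ℝ) (ht : 0 < t) (hp : (μ {ω | t ≤ |V ω|}).toReal ≤ 1 / 4) :
    ∫ ω in {ω | t ≤ |V ω|}, |V ω| ∂μ ≤ 4 * t * (μ {ω | t ≤ |V ω|}).toReal := by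
  set ν := μ.map V with hν
  have hprob : IsProbabilityMeasure ν := Measure.isProbabilityMeasure_map hmeas.aemeasurable
  have hAmeas : ∀ s : ℝ, MeasurableSet {x : ℝ | s ≤ |x|} := fun s =>
    measurableSet_le measurable_const measurable_id.abs
  have hSmeas : ∀ s : ℝ, MeasurableSet {ω | s ≤ |V ω|} := fun s =>
    measurableSet_le measurable_const hmeas.abs
  have hmap : ∀ s : ℝ, μ {ω | s ≤ |V ω|} = ν {x | s ≤ |x|} := fun s => by
    rw [hν, Measure.map_apply hmeas (hAmeas s)]; rfl
  -- symmetry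
  have hsymm : ∀ s : ℝ, ν (Set.Iic (-s)) = ν (Set.Ici s) := by
    intro s
    have h1 : ν (Set.Iic (-s)) = μ {ω | -V ω ≤ -s} := by
      rw [hsym, Measure.map_apply (f := fun ω => -V ω) hmeas.neg measurableSet_Iic]; rfl
    have h2 : {ω | -V ω ≤ -s} = {ω | s ≤ V ω} := by
      ext ω; simp only [Set.mem_setOf_eq, neg_le_neg_iff]
    rw [h1, h2, hν, Measure.map_apply hmeas measurableSet_Ici]; rfl
  -- split
  have hsplit : ∀ s : ℝ, 0 < s → ν {x | s ≤ |x|} = 2 * ν (Set.Ici s) := by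
    intro s hs
    have hset : {x : ℝ | s ≤ |x|} = Set.Iic (-s) ∪ Set.Ici s := by
      ext x
      simp only [Set.mem_setOf_eq, Set.mem_union, Set.mem_Iic, Set.mem_Ici, le_abs]
      constructor
      · rintro (h | h)
        · right; exact h
        · left; linarith
      · rintro (h | h)
        · right; linarith
        · left; exact h
    have hdisj : Disjoint (Set.Iic (-s)) (Set.Ici s) := by
      rw [Set.Iic_disjoint_Ici]
      exact not_le.mpr (by linarith)
    rw [hset, measure_union hdisj measurableSet_Ici, hsymm s, two_mul]
  -- lower bound at 0
  have hG0 : (2 : ℝ≥0∞)⁻¹ ≤ ν (Set.Ici 0) := by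
    have h1 : (1:ℝ≥0∞) ≤ ν (Set.Iic 0) + ν (Set.Ici 0) := by
      calc (1:ℝ≥0∞) = ν Set.univ := measure_univ.symm
        _ = ν (Set.Iic 0 ∪ Set.Ici 0) := by rw [Set.Iic_union_Ici]
        _ ≤ _ := measure_union_le _ _
    have h2 : ν (Set.Iic 0) = ν (Set.Ici 0) := by simpa using hsymm 0
    rw [h2, ← two_mul] at h1
    calc (2 : ℝ≥0∞)⁻¹ = 2⁻¹ * 1 := (mul_one _).symm
      _ ≤ 2⁻¹ * (2 * ν (Set.Ici 0)) := mul_le_mul_right h1 _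
      _ = ν (Set.Ici 0) := by
          rw [← mul_assoc, ENNReal.inv_mul_cancel two_ne_zero ENNReal.ofNat_ne_top, one_mul]
  -- tail bound
  have htail : ∀ n : ℕ, 1 ≤ n →
      ν {x | (n:ℝ)*t ≤ |x|} ≤ (ν {x | t ≤ |x|}) ^ n := by
    intro n hn
    have hn0 : (0:ℝ) < n := by exact_mod_cast hn
    set c : ℝ := (n:ℝ)⁻¹ with hc
    have hc0 : 0 < c := inv_pos.mpr hn0
    have hc1 : c ≤ 1 := by rw [hc, inv_le_one_iff₀]; right; exact_mod_cast hn
    have hcn : c * n = 1 := inv_mul_cancel₀ (ne_of_gt hn0)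
    have hkey := aux_key hlc t ht n hn
    set A := ν (Set.Ici ((n:ℝ)*t))
    set G := ν (Set.Ici t)
    -- replace B by 2⁻¹
    have step1 : A ^ c * (2⁻¹ : ℝ≥0∞) ^ (1-c) ≤ G := by
      refine le_trans (mul_le_mul_right (ENNReal.rpow_le_rpow hG0 (by linarith)) _) hkey
    have hcancel : ((2:ℝ≥0∞)⁻¹) ^ (1-c) * (2:ℝ≥0∞) ^ (1-c) = 1 := by
      rw [← ENNReal.mul_rpow_of_nonneg _ _ (by linarith : (0:ℝ) ≤ 1 - c),
        ENNReal.inv_mul_cancel two_ne_zero ENNReal.ofNat_ne_top, ENNReal.one_rpow]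
    have step2 : A ^ c ≤ G * (2:ℝ≥0∞) ^ (1-c) := by
      calc A ^ c = A ^ c * ((2⁻¹:ℝ≥0∞) ^ (1-c) * (2:ℝ≥0∞) ^ (1-c)) := by rw [hcancel, mul_one]
        _ = (A ^ c * (2⁻¹:ℝ≥0∞) ^ (1-c)) * (2:ℝ≥0∞) ^ (1-c) := by ring
        _ ≤ G * (2:ℝ≥0∞) ^ (1-c) := mul_le_mul_left step1 _
    have step3 : A ≤ G ^ (n:ℝ) * (2:ℝ≥0∞) ^ ((n:ℝ) - 1) := by
      have h := ENNReal.rpow_le_rpow step2 (le_of_lt hn0)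
      rw [← ENNReal.rpow_mul A c n, hcn, ENNReal.rpow_one] at h
      rw [ENNReal.mul_rpow_of_nonneg _ _ (le_of_lt hn0), ← ENNReal.rpow_mul] at h
      have : (1 - c) * (n:ℝ) = (n:ℝ) - 1 := by
        have : c * (n:ℝ) = 1 := hcn
        nlinarith [this]
      rwa [this] at h
    calc ν {x | (n:ℝ)*t ≤ |x|} = 2 * A := hsplit _ (by positivity)
      _ ≤ 2 * (G ^ (n:ℝ) * (2:ℝ≥0∞) ^ ((n:ℝ) - 1)) := mul_le_mul_right step3 _
      _ = (2 * G) ^ n := by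
          rw [mul_pow, ← ENNReal.rpow_natCast G n, ← ENNReal.rpow_natCast (2:ℝ≥0∞) n]
          rw [mul_comm (G ^ (n:ℝ)) _, ← mul_assoc]
          congr 1
          calc (2:ℝ≥0∞) * 2^((n:ℝ)-1) = 2^(1:ℝ) * 2^((n:ℝ)-1) := by rw [ENNReal.rpow_one]
            _ = 2^(1 + ((n:ℝ)-1)) := (ENNReal.rpow_add _ _ two_ne_zero ENNReal.ofNat_ne_top).symm
            _ = 2^(n:ℝ) := by norm_num
      _ = (ν {x | t ≤ |x|}) ^ n := by rw [← hsplit t ht]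
  -- back to μ
  set q : ℝ≥0∞ := μ {ω | t ≤ |V ω|} with hqdef
  have htailμ : ∀ n : ℕ, 1 ≤ n → μ {ω | (n:ℝ)*t ≤ |V ω|} ≤ q ^ n := by
    intro n hn
    rw [hmap, hqdef, hmap]
    exact htail n hn
  have hq4 : q ≤ 4⁻¹ := by
    have hqt : q ≠ ⊤ := measure_ne_top μ _
    have : q ≤ ENNReal.ofReal (1/4) := by
      rw [← ENNReal.ofReal_toReal hqt]
      exact ENNReal.ofReal_le_ofReal hp
    refine this.trans_eq ?_
    rw [show (1:ℝ)/4 = (4:ℝ)⁻¹ by norm_num, ENNReal.ofReal_inv_of_pos (by norm_num)]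
    norm_num
  -- partition
  set D : ℕ → Set Ω := fun n => {ω | ((n:ℝ)+1)*t ≤ |V ω|} \ {ω | ((n:ℝ)+2)*t ≤ |V ω|} with hD
  have hDmeas : ∀ n, MeasurableSet (D n) := fun n => (hSmeas _).diff (hSmeas _)
  have hDdisj : Pairwise (Function.onFun Disjoint D) := by
    have haux : ∀ m n : ℕ, m < n → Disjoint (D m) (D n) := by
      intro m n hmn
      rw [Set.disjoint_left]
      rintro ω ⟨_, hm2⟩ ⟨hn1, _⟩
      simp only [Set.mem_setOf_eq, not_le] at hm2
      have hmn' : (m:ℝ) + 2 ≤ (n:ℝ) + 1 := by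
        have : (m:ℝ) + 1 ≤ n := by exact_mod_cast hmn
        linarith
      have := hn1
      simp only [Set.mem_setOf_eq] at this
      nlinarith
    intro m n hmn
    rcases hmn.lt_or_gt with h | h
    · exact haux m n h
    · exact (haux n m h).symm
  have hDunion : (⋃ n, D n) = {ω | t ≤ |V ω|} := by
    ext ω
    simp only [Set.mem_iUnion, hD, Set.mem_diff, Set.mem_setOf_eq, not_le]
    constructor
    · rintro ⟨n, h1, _⟩
      have : t ≤ ((n:ℝ)+1)*t := by nlinarith [Nat.cast_nonneg (α := ℝ) n]
      linarith
    · intro hω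
      have hP : ∃ n : ℕ, |V ω| < ((n:ℝ)+2)*t := by
        obtain ⟨n, hn⟩ := exists_nat_gt (|V ω| / t)
        refine ⟨n, ?_⟩
        rw [div_lt_iff₀ ht] at hn
        nlinarith
      classical
      refine ⟨Nat.find hP, ?_, Nat.find_spec hP⟩
      rcases Nat.eq_zero_or_pos (Nat.find hP) with h0 | hpos
      · rw [h0]; simpa using hω
      · obtain ⟨m, hm⟩ := Nat.exists_eq_succ_of_ne_zero (Nat.pos_iff_ne_zero.mp hpos)
        have := Nat.find_min hP (m := m) (by omega)
        push_neg at this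
        rw [hm]
        push_cast
        linarith
  -- lintegral bound
  have hlin : (∫⁻ ω in {ω | t ≤ |V ω|}, ENNReal.ofReal |V ω| ∂μ)
      ≤ 4 * ENNReal.ofReal t * q := by
    rw [← hDunion, lintegral_iUnion hDmeas hDdisj]
    have hterm : ∀ n : ℕ, (∫⁻ ω in D n, ENNReal.ofReal |V ω| ∂μ)
        ≤ ENNReal.ofReal (((n:ℝ)+2)*t) * q ^ (n+1) := by
      intro n
      have h1 : (∫⁻ ω in D n, ENNReal.ofReal |V ω| ∂μ)
          ≤ (∫⁻ _ in D n, ENNReal.ofReal (((n:ℝ)+2)*t) ∂μ) := by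
        refine setLIntegral_mono measurable_const ?_
        intro ω hω
        exact ENNReal.ofReal_le_ofReal (le_of_lt (by simpa [hD, Set.mem_diff, not_le] using hω.2))
      rw [setLIntegral_const] at h1
      refine h1.trans ?_
      refine mul_le_mul_right ?_ _
      calc μ (D n) ≤ μ {ω | ((n:ℝ)+1)*t ≤ |V ω|} := measure_mono Set.diff_subset
        _ = μ {ω | ((n+1:ℕ):ℝ)*t ≤ |V ω|} := by push_cast; ring_nf
        _ ≤ q ^ (n+1) := htailμ (n+1) (Nat.le_add_left 1 n)
    refine (ENNReal.tsum_le_tsum hterm).trans ?_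
    have hterm2 : ∀ n : ℕ, ENNReal.ofReal (((n:ℝ)+2)*t) * q ^ (n+1)
        ≤ ENNReal.ofReal t * (2 * (2⁻¹:ℝ≥0∞) ^ n) * q := by
      intro n
      have he1 : ENNReal.ofReal (((n:ℝ)+2)*t) = ((n:ℕ)+2 : ℝ≥0∞) * ENNReal.ofReal t := by
        rw [ENNReal.ofReal_mul (by positivity)]
        congr 1
        rw [show ((n:ℝ)+2) = ((n+2 : ℕ):ℝ) by push_cast; ring, ENNReal.ofReal_natCast]
        push_cast
        ring
      rw [he1, pow_succ]
      have hnb : ((n:ℕ)+2 : ℝ≥0∞) ≤ 2 ^ (n+1) := by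
        have : (n+2 : ℕ) ≤ 2 ^ (n+1) := by
          calc n + 2 = (n + 1) + 1 := by ring
            _ ≤ 2^(n+1) := Nat.succ_le_of_lt (Nat.lt_two_pow_self)
        exact_mod_cast this
      have hqn : q ^ n ≤ (4⁻¹:ℝ≥0∞) ^ n := pow_le_pow_left' hq4 n
      calc ((n:ℕ)+2 : ℝ≥0∞) * ENNReal.ofReal t * (q ^ n * q)
          ≤ 2 ^ (n+1) * ENNReal.ofReal t * ((4⁻¹:ℝ≥0∞) ^ n * q) := by
            exact mul_le_mul (mul_le_mul_left hnb _) (mul_le_mul_left hqn q)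
              zero_le zero_le
        _ = ENNReal.ofReal t * (2 * (2⁻¹:ℝ≥0∞) ^ n) * q := by
            have h4 : (4⁻¹:ℝ≥0∞) = 2⁻¹ * 2⁻¹ := by
              rw [← ENNReal.mul_inv (Or.inl two_ne_zero) (Or.inl ENNReal.ofNat_ne_top)]
              norm_num
            rw [h4, mul_pow, pow_succ]
            rw [show ((2:ℝ≥0∞) ^ n * 2) * ENNReal.ofReal t * (((2⁻¹:ℝ≥0∞)^n * (2⁻¹:ℝ≥0∞)^n) * q)
              = ENNReal.ofReal t * (2 * ((2 * 2⁻¹:ℝ≥0∞)^n * (2⁻¹:ℝ≥0∞)^n)) * q by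
                rw [mul_pow]; ring]
            rw [ENNReal.mul_inv_cancel two_ne_zero ENNReal.ofNat_ne_top, one_pow, one_mul]
    refine (ENNReal.tsum_le_tsum hterm2).trans ?_
    rw [ENNReal.tsum_mul_right, ENNReal.tsum_mul_left, ENNReal.tsum_mul_left,
      ENNReal.tsum_geometric]
    have : (1 - (2⁻¹:ℝ≥0∞))⁻¹ = 2 := by
      rw [ENNReal.one_sub_inv_two, inv_inv]
    rw [this]
    rw [show ENNReal.ofReal t * (2 * 2) * q = 4 * ENNReal.ofReal t * q by ring_nf]
  -- convert
  have hint : (∫ ω in {ω | t ≤ |V ω|}, |V ω| ∂μ)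
      = (∫⁻ ω in {ω | t ≤ |V ω|}, ENNReal.ofReal |V ω| ∂μ).toReal := by
    rw [integral_eq_lintegral_of_nonneg_ae]
    · exact Filter.Eventually.of_forall fun ω => abs_nonneg _
    · exact (hmeas.abs.aestronglyMeasurable).restrict
  rw [hint]
  have hfin : 4 * ENNReal.ofReal t * q ≠ ⊤ := by
    refine ENNReal.mul_ne_top (ENNReal.mul_ne_top (by norm_num) ENNReal.ofReal_ne_top) ?_
    exact measure_ne_top μ _
  calc (∫⁻ ω in {ω | t ≤ |V ω|}, ENNReal.ofReal |V ω| ∂μ).toReal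
      ≤ (4 * ENNReal.ofReal t * q).toReal := ENNReal.toReal_mono hfin hlin
    _ = 4 * t * q.toReal := by
        rw [ENNReal.toReal_mul, ENNReal.toReal_mul, ENNReal.toReal_ofReal ht.le]
        norm_num
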